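/- arXiv:2507.05851 — 2 statements merged into one kernel-verified Lean document; each statement's English description precedes it below -/
import Mathlib

section
/- Pointwise estimate for the homotopy operator: for a k+1-form ω = ∑_j f_j dx^j on B(r) ⊂ ℝ^n and Sω(x) = ∫₀¹ t^k ω(tx)⟨x, ·⟩ dt, one has |Sω|_x ≤ r √(binom(n,k+1)) ∫₀¹ t^k |ω|_{tx} dt for every x ∈ B(r). -/
open MeasureTheory

/-- A measurable differential `k`-form on a domain in `ℝⁿ`, represented by its
coefficient functions over `k`-element subsets of `Fin n`. -/
def DiffForm (n k : ℕ) : Type :=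
  EuclideanSpace ℝ (Fin n) → {s : Finset (Fin n) // s.card = k} → ℝ

/-- Pointwise (Euclidean) norm of the coefficient vector of a form. -/
noncomputable def formPtNorm {n k : ℕ} (ω : DiffForm n k) (x : EuclideanSpace ℝ (Fin n)) : ℝ :=
  Real.sqrt (∑ j, (ω x j) ^ 2)

/-- The homotopy operator `S` sending `(k+1)`-forms to `k`-forms,
`Sω(x) = ∫₀¹ t^k ω(tx)⟨x, ·⟩ dt`, in coefficients. -/
noncomputable def homotopyS {n k : ℕ} (ω : DiffForm n (k + 1)) : DiffForm n k :=
  fun x β => ∑ a ∈ β.1ᶜ.attach,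
    (-1 : ℝ) ^ ((β.1.filter (· < a.1)).card) * x a.1 *
      ∫ t in (0:ℝ)..1, t ^ k * ω (t • x)
        ⟨insert a.1 β.1, by
          rw [Finset.card_insert_of_notMem (Finset.mem_compl.mp a.2), β.2]⟩

/-- Double counting of pairs `(s, a)` with `|s| = k`, `a ∉ s`, versus pairs
`(u, a)` with `|u| = k+1`, `a ∈ u`. -/
lemma pair_sum_eq (n k : ℕ) (f : Finset (Fin n) → Fin n → ℝ) :
    ∑ s ∈ Finset.univ.powersetCard k, ∑ a ∈ sᶜ, f (insert a s) a
      = ∑ u ∈ Finset.univ.powersetCard (k+1), ∑ a ∈ u, f u a := by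
  rw [Finset.sum_sigma', Finset.sum_sigma']
  refine Finset.sum_nbij' (fun p => ⟨insert p.2 p.1, p.2⟩) (fun q => ⟨q.1.erase q.2, q.2⟩)
    ?_ ?_ ?_ ?_ ?_
  · rintro ⟨s, a⟩ hp
    simp only [Finset.mem_sigma, Finset.mem_powersetCard_univ, Finset.mem_compl] at hp ⊢
    exact ⟨by rw [Finset.card_insert_of_notMem hp.2, hp.1], Finset.mem_insert_self _ _⟩
  · rintro ⟨u, a⟩ hq
    simp only [Finset.mem_sigma, Finset.mem_powersetCard_univ, Finset.mem_compl] at hq ⊢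
    exact ⟨by simp [Finset.card_erase_of_mem hq.2, hq.1], Finset.notMem_erase _ _⟩
  · rintro ⟨s, a⟩ hp
    simp only [Finset.mem_sigma, Finset.mem_powersetCard_univ, Finset.mem_compl] at hp
    simp [Finset.erase_insert hp.2]
  · rintro ⟨u, a⟩ hq
    simp only [Finset.mem_sigma, Finset.mem_powersetCard_univ] at hq
    simp [Finset.insert_erase hq.2]
  · rintro ⟨s, a⟩ _
    rfl

/-- The `(k+1)`-set obtained by inserting a new element into a `k`-set. -/
def insSet {n k : ℕ} (β : {s : Finset (Fin n) // s.card = k}) (a : {a : Fin n // a ∈ β.1ᶜ}) :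
    {s : Finset (Fin n) // s.card = k + 1} :=
  ⟨insert a.1 β.1, by
    rw [Finset.card_insert_of_notMem (Finset.mem_compl.mp a.2), β.2]⟩

/-- The key pointwise Cauchy–Schwarz estimate for the interior product. -/
lemma key_cs (n k : ℕ) (x : EuclideanSpace ℝ (Fin n))
    (F : {s : Finset (Fin n) // s.card = k + 1} → ℝ) :
    Real.sqrt (∑ β : {s : Finset (Fin n) // s.card = k},
        (∑ a ∈ β.1ᶜ.attach,
          (-1 : ℝ) ^ ((β.1.filter (· < a.1)).card) * x a.1 * F (insSet β a)) ^ 2)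
      ≤ ‖x‖ * Real.sqrt (n.choose (k + 1)) * Real.sqrt (∑ j, F j ^ 2) := by
  classical
  set A : ℝ := ∑ j, |F j| with hA
  have hA0 : 0 ≤ A := Finset.sum_nonneg fun _ _ => abs_nonneg _
  have hnormsq : ‖x‖ ^ 2 = ∑ i, x i ^ 2 := by
    rw [EuclideanSpace.norm_eq, Real.sq_sqrt (Finset.sum_nonneg fun _ _ => sq_nonneg _)]
    simp [Real.norm_eq_abs, sq_abs]
  -- step 1 : per-β bound
  have hstep : ∀ β : {s : Finset (Fin n) // s.card = k},
      (∑ a ∈ β.1ᶜ.attach,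
        (-1 : ℝ) ^ ((β.1.filter (· < a.1)).card) * x a.1 * F (insSet β a)) ^ 2
      ≤ (∑ a ∈ β.1ᶜ.attach, (x a.1) ^ 2 * |F (insSet β a)|) * A := by
    intro β
    have h1 : (∑ a ∈ β.1ᶜ.attach,
        (-1 : ℝ) ^ ((β.1.filter (· < a.1)).card) * x a.1 * F (insSet β a)) ^ 2
        ≤ (∑ a ∈ β.1ᶜ.attach, |x a.1| * |F (insSet β a)|) ^ 2 := by
      rw [← sq_abs]
      apply pow_le_pow_left₀ (abs_nonneg _)
      refine (Finset.abs_sum_le_sum_abs _ _).trans (le_of_eq (Finset.sum_congr rfl ?_))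
      intro a _
      rw [abs_mul, abs_mul, abs_pow, abs_neg, abs_one, one_pow, one_mul]
    have h2 : (∑ a ∈ β.1ᶜ.attach, |x a.1| * |F (insSet β a)|) ^ 2
        ≤ (∑ a ∈ β.1ᶜ.attach, (x a.1) ^ 2 * |F (insSet β a)|)
          * (∑ a ∈ β.1ᶜ.attach, |F (insSet β a)|) := by
      refine Finset.sum_sq_le_sum_mul_sum_of_sq_eq_mul _
        (fun a _ => mul_nonneg (sq_nonneg _) (abs_nonneg _))
        (fun a _ => abs_nonneg _) (fun a _ => ?_)
      rw [mul_pow, sq_abs]; ring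
    have h3 : (∑ a ∈ β.1ᶜ.attach, |F (insSet β a)|) ≤ A := by
      rw [hA]
      have hinj : ∀ a ∈ β.1ᶜ.attach, ∀ b ∈ β.1ᶜ.attach, insSet β a = insSet β b → a = b := by
        intro a _ b _ hab
        have h0 : a.1 ∈ (insSet β b).1 := by
          rw [← hab]; exact Finset.mem_insert_self _ _
        rcases Finset.mem_insert.mp h0 with h | h
        · exact Subtype.ext h
        · exact absurd h (Finset.mem_compl.mp a.2)
      have him : ∑ a ∈ β.1ᶜ.attach, |F (insSet β a)|
          = ∑ j ∈ Finset.image (insSet β) β.1ᶜ.attach, |F j| :=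
        (Finset.sum_image (f := fun j => |F j|)
          (fun a ha b hb hab => hinj a ha b hb hab)).symm
      rw [him]
      exact Finset.sum_le_sum_of_subset_of_nonneg (Finset.subset_univ _)
        (fun _ _ _ => abs_nonneg _)
    calc _ ≤ _ := h1
      _ ≤ _ := h2
      _ ≤ _ := mul_le_mul_of_nonneg_left h3
          (Finset.sum_nonneg fun a _ => mul_nonneg (sq_nonneg _) (abs_nonneg _))
  -- step 2 : pair resummation
  have hpair : ∑ β : {s : Finset (Fin n) // s.card = k},
      (∑ a ∈ β.1ᶜ.attach, (x a.1) ^ 2 * |F (insSet β a)|) ≤ ‖x‖ ^ 2 * A := by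
    set F' : Finset (Fin n) → ℝ := fun u => if h : u.card = k + 1 then |F ⟨u, h⟩| else 0 with hF'
    have e1 : ∀ β : {s : Finset (Fin n) // s.card = k},
        (∑ a ∈ β.1ᶜ.attach, (x a.1) ^ 2 * |F (insSet β a)|)
          = ∑ a ∈ β.1ᶜ, (x a) ^ 2 * F' (insert a β.1) := by
      intro β
      rw [← Finset.sum_attach β.1ᶜ (fun a => (x a) ^ 2 * F' (insert a β.1))]
      refine Finset.sum_congr rfl fun a _ => ?_
      have hc : (insert a.1 β.1).card = k + 1 :=
        by rw [Finset.card_insert_of_notMem (Finset.mem_compl.mp a.2), β.2]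
      rw [hF']
      simp only [dif_pos hc]
      rfl
    calc ∑ β : {s : Finset (Fin n) // s.card = k},
          (∑ a ∈ β.1ᶜ.attach, (x a.1) ^ 2 * |F (insSet β a)|)
        = ∑ β : {s : Finset (Fin n) // s.card = k}, ∑ a ∈ β.1ᶜ, (x a) ^ 2 * F' (insert a β.1) :=
          Finset.sum_congr rfl fun β _ => e1 β
      _ = ∑ s ∈ Finset.univ.powersetCard k, ∑ a ∈ sᶜ, (x a) ^ 2 * F' (insert a s) :=
          (Finset.sum_subtype (Finset.univ.powersetCard k)
            (fun s => Finset.mem_powersetCard_univ)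
            (fun s => ∑ a ∈ sᶜ, (x a) ^ 2 * F' (insert a s))).symm
      _ = ∑ u ∈ Finset.univ.powersetCard (k+1), ∑ a ∈ u, (x a) ^ 2 * F' u :=
          pair_sum_eq n k (fun u a => (x a) ^ 2 * F' u)
      _ = ∑ j : {s : Finset (Fin n) // s.card = k + 1}, ∑ a ∈ j.1, (x a) ^ 2 * F' j.1 :=
          Finset.sum_subtype (Finset.univ.powersetCard (k+1))
            (fun s => Finset.mem_powersetCard_univ)
            (fun u => ∑ a ∈ u, (x a) ^ 2 * F' u)
      _ = ∑ j : {s : Finset (Fin n) // s.card = k + 1}, ∑ a ∈ j.1, (x a) ^ 2 * |F j| := by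
          refine Finset.sum_congr rfl fun j _ => Finset.sum_congr rfl fun a _ => ?_
          rw [hF']
          simp only [dif_pos j.2]
      _ ≤ ∑ j : {s : Finset (Fin n) // s.card = k + 1}, ‖x‖ ^ 2 * |F j| := by
          refine Finset.sum_le_sum fun j _ => ?_
          rw [← Finset.sum_mul]
          refine mul_le_mul_of_nonneg_right ?_ (abs_nonneg _)
          rw [hnormsq]
          exact Finset.sum_le_sum_of_subset_of_nonneg (Finset.subset_univ _)
            (fun _ _ _ => sq_nonneg _)
      _ = ‖x‖ ^ 2 * A := by rw [hA, Finset.mul_sum]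
  -- step 3 : A ≤ √C √(∑ F²)
  have hAC : A ≤ Real.sqrt (n.choose (k + 1)) * Real.sqrt (∑ j, F j ^ 2) := by
    have h1 : A ^ 2 ≤ (n.choose (k + 1) : ℝ) * ∑ j, F j ^ 2 := by
      have := sq_sum_le_card_mul_sum_sq
        (s := (Finset.univ : Finset {s : Finset (Fin n) // s.card = k + 1}))
        (f := fun j => |F j|)
      simp only [sq_abs] at this
      rwa [Finset.card_univ, Fintype.card_finset_len, Fintype.card_fin] at this
    calc A = Real.sqrt (A ^ 2) := (Real.sqrt_sq hA0).symm
      _ ≤ Real.sqrt ((n.choose (k + 1) : ℝ) * ∑ j, F j ^ 2) := Real.sqrt_le_sqrt h1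
      _ = _ := Real.sqrt_mul (Nat.cast_nonneg _) _
  -- assemble
  calc Real.sqrt (∑ β : {s : Finset (Fin n) // s.card = k},
        (∑ a ∈ β.1ᶜ.attach,
          (-1 : ℝ) ^ ((β.1.filter (· < a.1)).card) * x a.1 * F (insSet β a)) ^ 2)
      ≤ Real.sqrt ((‖x‖ * A) ^ 2) := by
        apply Real.sqrt_le_sqrt
        calc _ ≤ ∑ β : {s : Finset (Fin n) // s.card = k},
              (∑ a ∈ β.1ᶜ.attach, (x a.1) ^ 2 * |F (insSet β a)|) * A :=
              Finset.sum_le_sum fun β _ => hstep β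
          _ = (∑ β : {s : Finset (Fin n) // s.card = k},
              ∑ a ∈ β.1ᶜ.attach, (x a.1) ^ 2 * |F (insSet β a)|) * A := by
              rw [Finset.sum_mul]
          _ ≤ (‖x‖ ^ 2 * A) * A := mul_le_mul_of_nonneg_right hpair hA0
          _ = (‖x‖ * A) ^ 2 := by ring
    _ = ‖x‖ * A := Real.sqrt_sq (mul_nonneg (norm_nonneg _) hA0)
    _ ≤ ‖x‖ * (Real.sqrt (n.choose (k + 1)) * Real.sqrt (∑ j, F j ^ 2)) :=
        mul_le_mul_of_nonneg_left hAC (norm_nonneg _)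
    _ = _ := (mul_assoc _ _ _).symm

/-- **Pointwise estimate for the homotopy operator:** for a `(k+1)`-form `ω` on
`B(r) ⊆ ℝⁿ` and every `x ∈ B(r)`,
`|Sω|_x ≤ r √(C(n,k+1)) ∫₀¹ t^k |ω|_{tx} dt`. -/
theorem homotopy_pointwise_bound (n k : ℕ) (r : ℝ) (hr : 0 < r)
    (ω : DiffForm n (k + 1))
    (hint₁ : ∀ x ∈ Metric.ball (0 : EuclideanSpace ℝ (Fin n)) r, ∀ j,
      IntervalIntegrable (fun t => t ^ k * ω (t • x) j) volume 0 1)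
    (hint₂ : ∀ x ∈ Metric.ball (0 : EuclideanSpace ℝ (Fin n)) r,
      IntervalIntegrable (fun t => t ^ k * formPtNorm ω (t • x)) volume 0 1) :
    ∀ x ∈ Metric.ball (0 : EuclideanSpace ℝ (Fin n)) r,
      formPtNorm (homotopyS ω) x
        ≤ r * Real.sqrt (n.choose (k + 1)) *
          ∫ t in (0:ℝ)..1, t ^ k * formPtNorm ω (t • x) := by
  intro x hx
  classical
  set g : {s : Finset (Fin n) // s.card = k} → ℝ → ℝ := fun β t =>
    ∑ a ∈ β.1ᶜ.attach, (-1 : ℝ) ^ ((β.1.filter (· < a.1)).card) * x a.1 *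
      (t ^ k * ω (t • x) (insSet β a)) with hg
  have hterm_int : ∀ (β : {s : Finset (Fin n) // s.card = k}) (a : {a : Fin n // a ∈ β.1ᶜ}),
      IntervalIntegrable (fun t => (-1 : ℝ) ^ ((β.1.filter (· < a.1)).card) * x a.1 *
        (t ^ k * ω (t • x) (insSet β a))) volume 0 1 :=
    fun β a => (hint₁ x hx (insSet β a)).const_mul _
  have hg_int : ∀ β, IntervalIntegrable (g β) volume 0 1 := by
    intro β
    have h := IntervalIntegrable.sum (μ := volume) (a := (0:ℝ)) (b := 1) β.1ᶜ.attach
      (f := fun a t => (-1 : ℝ) ^ ((β.1.filter (· < a.1)).card) * x a.1 *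
        (t ^ k * ω (t • x) (insSet β a)))
      (fun a _ => hterm_int β a)
    have heq : (∑ a ∈ β.1ᶜ.attach, fun t => (-1 : ℝ) ^ ((β.1.filter (· < a.1)).card) * x a.1 *
        (t ^ k * ω (t • x) (insSet β a))) = g β :=
      Finset.sum_fn β.1ᶜ.attach _
    rwa [heq] at h
  have hS : ∀ β, homotopyS ω x β = ∫ t in (0:ℝ)..1, g β t := by
    intro β
    have h1 : homotopyS ω x β = ∑ a ∈ β.1ᶜ.attach, ∫ t in (0:ℝ)..1,
        (-1 : ℝ) ^ ((β.1.filter (· < a.1)).card) * x a.1 *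
          (t ^ k * ω (t • x) (insSet β a)) := by
      refine Finset.sum_congr rfl fun a _ => ?_
      rw [intervalIntegral.integral_const_mul]
      rfl
    rw [h1, ← intervalIntegral.integral_finset_sum (fun a _ => hterm_int β a)]
  set G : ℝ → EuclideanSpace ℝ {s : Finset (Fin n) // s.card = k} :=
    fun t => ∑ β, g β t • EuclideanSpace.single β (1:ℝ) with hG
  have hGsingle_int : ∀ β : {s : Finset (Fin n) // s.card = k},
      IntervalIntegrable (fun t => g β t • EuclideanSpace.single β (1:ℝ)) volume 0 1 :=
    fun β => ⟨((hg_int β).1).smul_const _, ((hg_int β).2).smul_const _⟩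
  have hG_int : IntervalIntegrable G volume 0 1 := by
    have h := IntervalIntegrable.sum (μ := volume) (a := (0:ℝ)) (b := 1) Finset.univ
      (f := fun (β : {s : Finset (Fin n) // s.card = k}) t =>
        g β t • EuclideanSpace.single β (1:ℝ))
      (fun β _ => hGsingle_int β)
    have heq : (∑ β : {s : Finset (Fin n) // s.card = k},
        fun t => g β t • EuclideanSpace.single β (1:ℝ)) = G :=
      Finset.sum_fn Finset.univ _
    rwa [heq] at h
  have hEval : ∀ (c : {s : Finset (Fin n) // s.card = k} → ℝ)
      (β : {s : Finset (Fin n) // s.card = k}),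
      (∑ β', c β' • EuclideanSpace.single β' (1:ℝ)) β = c β := by
    intro c β
    have h0 : (∑ β', c β' • EuclideanSpace.single β' (1:ℝ)) β
        = ∑ β', (c β' • EuclideanSpace.single β' (1:ℝ)) β :=
      by rw [WithLp.ofLp_sum, Finset.sum_apply]
    rw [h0]
    simp [EuclideanSpace.single_apply]
  have hIval : (∫ t in (0:ℝ)..1, G t)
      = ∑ β, (∫ t in (0:ℝ)..1, g β t) • EuclideanSpace.single β (1:ℝ) := by
    rw [hG]
    rw [intervalIntegral.integral_finset_sum (fun β _ => hGsingle_int β)]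
    exact Finset.sum_congr rfl fun β _ => intervalIntegral.integral_smul_const _ _
  have hcomp : ∀ β, (∫ t in (0:ℝ)..1, G t) β = homotopyS ω x β := by
    intro β
    rw [hIval]
    rw [hEval (fun β' => ∫ t in (0:ℝ)..1, g β' t) β]
    exact (hS β).symm
  have hnormS : formPtNorm (homotopyS ω) x = ‖∫ t in (0:ℝ)..1, G t‖ := by
    rw [EuclideanSpace.norm_eq]
    show Real.sqrt (∑ β, (homotopyS ω x β) ^ 2) = _
    congr 1
    refine Finset.sum_congr rfl fun β _ => ?_
    rw [hcomp β, Real.norm_eq_abs, sq_abs]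
  have hGnorm : ∀ t ∈ Set.Icc (0:ℝ) 1,
      ‖G t‖ ≤ (‖x‖ * Real.sqrt (n.choose (k + 1))) * (t ^ k * formPtNorm ω (t • x)) := by
    intro t ht
    have h1 : ‖G t‖ = Real.sqrt (∑ β : {s : Finset (Fin n) // s.card = k}, (g β t) ^ 2) := by
      rw [EuclideanSpace.norm_eq]
      congr 1
      refine Finset.sum_congr rfl fun β _ => ?_
      have h0 : G t β = g β t := hEval (fun β' => g β' t) β
      rw [h0, Real.norm_eq_abs, sq_abs]
    have h2 := key_cs n k x (fun j => t ^ k * ω (t • x) j)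
    have h3 : Real.sqrt (∑ j, (t ^ k * ω (t • x) j) ^ 2)
        = t ^ k * formPtNorm ω (t • x) := by
      have : ∑ j, (t ^ k * ω (t • x) j) ^ 2 = (t ^ k) ^ 2 * ∑ j, (ω (t • x) j) ^ 2 := by
        rw [Finset.mul_sum]
        exact Finset.sum_congr rfl fun j _ => by ring
      rw [this, Real.sqrt_mul (sq_nonneg _), Real.sqrt_sq (pow_nonneg ht.1 k)]
      rfl
    rw [h1]
    calc Real.sqrt (∑ β : {s : Finset (Fin n) // s.card = k}, (g β t) ^ 2)
        ≤ ‖x‖ * Real.sqrt (n.choose (k + 1)) *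
            Real.sqrt (∑ j, (t ^ k * ω (t • x) j) ^ 2) := h2
      _ = (‖x‖ * Real.sqrt (n.choose (k + 1))) * (t ^ k * formPtNorm ω (t • x)) := by
          rw [h3]
  have hI0 : 0 ≤ ∫ t in (0:ℝ)..1, t ^ k * formPtNorm ω (t • x) :=
    intervalIntegral.integral_nonneg (by norm_num)
      (fun u hu => mul_nonneg (pow_nonneg hu.1 k) (Real.sqrt_nonneg _))
  have hxr : ‖x‖ ≤ r := le_of_lt (mem_ball_zero_iff.mp hx)
  calc formPtNorm (homotopyS ω) x = ‖∫ t in (0:ℝ)..1, G t‖ := hnormS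
    _ ≤ ∫ t in (0:ℝ)..1, ‖G t‖ :=
        intervalIntegral.norm_integral_le_integral_norm (by norm_num)
    _ ≤ ∫ t in (0:ℝ)..1, (‖x‖ * Real.sqrt (n.choose (k + 1))) *
          (t ^ k * formPtNorm ω (t • x)) :=
        intervalIntegral.integral_mono_on (by norm_num) hG_int.norm
          ((hint₂ x hx).const_mul _) hGnorm
    _ = (‖x‖ * Real.sqrt (n.choose (k + 1))) *
          ∫ t in (0:ℝ)..1, t ^ k * formPtNorm ω (t • x) :=
        intervalIntegral.integral_const_mul _ _
    _ ≤ r * Real.sqrt (n.choose (k + 1)) *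
          ∫ t in (0:ℝ)..1, t ^ k * formPtNorm ω (t • x) := by
        refine mul_le_mul_of_nonneg_right ?_ hI0
        exact mul_le_mul_of_nonneg_right hxr (Real.sqrt_nonneg _)
end

section
/- Let β: U → V be a C-bi-Lipschitz homeomorphism between subsets of ℝ^n (with |β(x)-β(x')| ≤ C|x-x'| and inverse α with |α(y)-α(y')| ≤ (1/C)|y-y'|). Then the pull-back operator β* on L^p k-forms is bounded with norm ‖β*‖ ≤ (n!^{(p+1)/p}/(n-k)!) · C^{(pk-n)/p}, and similarly ‖α*‖ ≤ (n!^{(p+1)/p}/(n-k)!) · C^{(n-pk)/p}. -/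
open MeasureTheory Filter Metric Set
set_option maxHeartbeats 1000000

/-- Pointwise Euclidean (ℓ²) norm of a coefficient vector indexed by a finite type. -/
noncomputable def coeffNorm {ι : Type*} [Fintype ι] (v : ι → ℝ) : ℝ :=
  Real.sqrt (∑ i, v i ^ 2)

/-- The `k × k` minor of the Jacobian `D` for increasing multi-indices `i, j`. -/
noncomputable def jacMinor (n k : ℕ)
    (D : EuclideanSpace ℝ (Fin n) →L[ℝ] EuclideanSpace ℝ (Fin n))
    (i j : {s : Finset (Fin n) // s.card = k}) : ℝ :=
  Matrix.det (Matrix.of fun a b : Fin k =>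
    D (EuclideanSpace.single ((i.1.orderIsoOfFin i.2 b : {x // x ∈ i.1}) : Fin n) 1)
      ((j.1.orderIsoOfFin j.2 a : {x // x ∈ j.1}) : Fin n))

lemma abs_coord_le {n : ℕ} (x : EuclideanSpace ℝ (Fin n)) (i : Fin n) : |x i| ≤ ‖x‖ := by
  rw [EuclideanSpace.norm_eq]
  have h : |x i| = Real.sqrt (‖x i‖ ^ 2) := by rw [Real.sqrt_sq_eq_abs]; simp
  rw [h]
  apply Real.sqrt_le_sqrt
  exact Finset.single_le_sum (f := fun j => ‖x j‖ ^ 2) (fun j _ => by positivity) (Finset.mem_univ i)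

lemma coeffNorm_nonneg {ι : Type*} [Fintype ι] (v : ι → ℝ) : 0 ≤ coeffNorm v :=
  Real.sqrt_nonneg _

lemma jacMinor_abs_le {n k : ℕ} {C : ℝ} (hC : 0 ≤ C)
    {L : EuclideanSpace ℝ (Fin n) →L[ℝ] EuclideanSpace ℝ (Fin n)} (hL : ∀ v, ‖L v‖ ≤ C * ‖v‖)
    (i j : {s : Finset (Fin n) // s.card = k}) :
    |jacMinor n k L i j| ≤ (k.factorial : ℝ) * C ^ k := by
  have hent : ∀ a b : Fin k,
      |(Matrix.of fun a b : Fin k =>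
        L (EuclideanSpace.single ((i.1.orderIsoOfFin i.2 b : {x // x ∈ i.1}) : Fin n) 1)
          ((j.1.orderIsoOfFin j.2 a : {x // x ∈ j.1}) : Fin n)) a b| ≤ C := by
    intro a b
    simp only [Matrix.of_apply]
    refine (abs_coord_le (L (EuclideanSpace.single _ 1)) _).trans ?_
    calc ‖L (EuclideanSpace.single ((i.1.orderIsoOfFin i.2 b : {x // x ∈ i.1}) : Fin n) (1:ℝ))‖
        ≤ C * ‖EuclideanSpace.single ((i.1.orderIsoOfFin i.2 b : {x // x ∈ i.1}) : Fin n) (1:ℝ)‖ :=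
          hL _
      _ = C := by rw [EuclideanSpace.norm_single]; simp
  have h := Matrix.det_le (abv := (AbsoluteValue.abs : AbsoluteValue ℝ ℝ)) hent
  simpa [jacMinor, Fintype.card_fin, nsmul_eq_mul] using h

lemma coeffNorm_pull_le {n k : ℕ} {C : ℝ} (hC : 0 ≤ C)
    {L : EuclideanSpace ℝ (Fin n) →L[ℝ] EuclideanSpace ℝ (Fin n)} (hL : ∀ v, ‖L v‖ ≤ C * ‖v‖)
    (w : {s : Finset (Fin n) // s.card = k} → ℝ) :
    coeffNorm (fun i => ∑ j, w j * jacMinor n k L i j)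
      ≤ (n.choose k : ℝ) * ((k.factorial : ℝ) * C ^ k) * coeffNorm w := by
  have hN0 : (0:ℝ) ≤ (n.choose k : ℝ) := by positivity
  set D : ℝ := (k.factorial : ℝ) * C ^ k with hD
  have hD0 : 0 ≤ D := by positivity
  have hsum : ∀ i, |∑ j, w j * jacMinor n k L i j| ≤ D * ∑ j, |w j| := by
    intro i
    calc |∑ j, w j * jacMinor n k L i j| ≤ ∑ j, |w j * jacMinor n k L i j| :=
          Finset.abs_sum_le_sum_abs _ _
      _ ≤ ∑ j, |w j| * D := by
          refine Finset.sum_le_sum fun j _ => ?_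
          rw [abs_mul]
          exact mul_le_mul_of_nonneg_left (jacMinor_abs_le hC hL i j) (abs_nonneg _)
      _ = D * ∑ j, |w j| := by rw [Finset.mul_sum]; simp [mul_comm]
  have hcard : ((Fintype.card {s : Finset (Fin n) // s.card = k}) : ℝ) = (n.choose k : ℝ) := by
    rw [Fintype.card_finset_len, Fintype.card_fin]
  have hCS : (∑ j, |w j|) ^ 2 ≤ (n.choose k : ℝ) * ∑ j, w j ^ 2 := by
    have h := sq_sum_le_card_mul_sum_sq (s := (Finset.univ : Finset {s : Finset (Fin n) // s.card = k}))
      (f := fun j => |w j|)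
    simpa [sq_abs, Finset.card_univ, hcard] using h
  have habs : ∑ j, |w j| ≤ Real.sqrt (n.choose k : ℝ) * coeffNorm w := by
    have h1 : (0:ℝ) ≤ ∑ j, |w j| := Finset.sum_nonneg fun j _ => abs_nonneg _
    have h2 := Real.sqrt_le_sqrt hCS
    rwa [Real.sqrt_sq h1, Real.sqrt_mul hN0] at h2
  have key : coeffNorm (fun i => ∑ j, w j * jacMinor n k L i j)
      ≤ Real.sqrt (n.choose k : ℝ) * (D * ∑ j, |w j|) := by
    rw [coeffNorm]
    have hb : ∀ i, (∑ j, w j * jacMinor n k L i j) ^ 2 ≤ (D * ∑ j, |w j|) ^ 2 := by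
      intro i
      rw [← sq_abs]
      exact pow_le_pow_left₀ (abs_nonneg _) (hsum i) 2
    calc Real.sqrt (∑ i, (∑ j, w j * jacMinor n k L i j) ^ 2)
        ≤ Real.sqrt (∑ _i : {s : Finset (Fin n) // s.card = k}, (D * ∑ j, |w j|) ^ 2) :=
          Real.sqrt_le_sqrt (Finset.sum_le_sum fun i _ => hb i)
      _ = Real.sqrt ((n.choose k : ℝ) * (D * ∑ j, |w j|) ^ 2) := by
          rw [Finset.sum_const, Finset.card_univ, nsmul_eq_mul, hcard]
      _ = Real.sqrt (n.choose k : ℝ) * (D * ∑ j, |w j|) := by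
          rw [Real.sqrt_mul hN0, Real.sqrt_sq (by positivity)]
  calc coeffNorm (fun i => ∑ j, w j * jacMinor n k L i j)
      ≤ Real.sqrt (n.choose k : ℝ) * (D * ∑ j, |w j|) := key
    _ ≤ Real.sqrt (n.choose k : ℝ) * (D * (Real.sqrt (n.choose k : ℝ) * coeffNorm w)) := by
        apply mul_le_mul_of_nonneg_left _ (Real.sqrt_nonneg _)
        exact mul_le_mul_of_nonneg_left habs hD0
    _ = (Real.sqrt (n.choose k : ℝ) * Real.sqrt (n.choose k : ℝ)) * D * coeffNorm w := by ring
    _ = (n.choose k : ℝ) * D * coeffNorm w := by rw [Real.mul_self_sqrt hN0]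

lemma abs_det_of_norm_eq {n : ℕ} {C : ℝ} (hC : 0 < C)
    {L : EuclideanSpace ℝ (Fin n) →L[ℝ] EuclideanSpace ℝ (Fin n)}
    (hL : ∀ v, ‖L v‖ = C * ‖v‖) : |L.det| = C ^ n := by
  set L₀ : EuclideanSpace ℝ (Fin n) →ₗ[ℝ] EuclideanSpace ℝ (Fin n) :=
    C⁻¹ • (L : EuclideanSpace ℝ (Fin n) →ₗ[ℝ] EuclideanSpace ℝ (Fin n)) with hL₀
  have hnorm : ∀ v, ‖L₀ v‖ = ‖v‖ := by
    intro v
    simp only [hL₀, LinearMap.smul_apply, norm_smul, ContinuousLinearMap.coe_coe]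
    rw [hL v, norm_inv, Real.norm_eq_abs, abs_of_pos hC]
    field_simp
  have hinner : ∀ x y, (inner ℝ (L₀ x) (L₀ y) : ℝ) = inner ℝ x y :=
    (LinearMap.norm_map_iff_inner_map_map L₀).1 hnorm
  -- matrix of L₀ in the standard basis
  set b := (EuclideanSpace.basisFun (Fin n) ℝ).toBasis with hb
  set A := LinearMap.toMatrix b b L₀ with hA
  have hAentry : ∀ p q : Fin n, A p q = L₀ (EuclideanSpace.single q 1) p := by
    intro p q
    rw [hA, LinearMap.toMatrix_apply]
    simp [hb, OrthonormalBasis.coe_toBasis_repr_apply, EuclideanSpace.basisFun_repr,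
      OrthonormalBasis.coe_toBasis, EuclideanSpace.basisFun_apply]
  have hATA : A.transpose * A = 1 := by
    ext p q
    have : (A.transpose * A) p q = ∑ r, A r p * A r q := by
      simp [Matrix.mul_apply, Matrix.transpose_apply]
    rw [this]
    have hsum : ∑ r, A r p * A r q
        = (inner ℝ (L₀ (EuclideanSpace.single p 1)) (L₀ (EuclideanSpace.single q 1)) : ℝ) := by
      rw [PiLp.inner_apply]
      refine Finset.sum_congr rfl fun r _ => ?_
      rw [hAentry r p, hAentry r q]
      simp [RCLike.inner_apply, mul_comm]
    rw [hsum, hinner, EuclideanSpace.inner_single_left]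
    simp only [map_one, one_mul, EuclideanSpace.single_apply, Matrix.one_apply]
  have hdetA : A.det * A.det = 1 := by
    have := congrArg Matrix.det hATA
    rwa [Matrix.det_mul, Matrix.det_transpose, Matrix.det_one] at this
  have habs : |LinearMap.det L₀| = 1 := by
    rw [← LinearMap.det_toMatrix b L₀, ← hA]
    rcases mul_self_eq_one_iff.1 hdetA with h | h <;> rw [h] <;> norm_num
  have hLdec : (L : EuclideanSpace ℝ (Fin n) →ₗ[ℝ] EuclideanSpace ℝ (Fin n)) = C • L₀ := by
    rw [hL₀, smul_smul, mul_inv_cancel₀ (ne_of_gt hC), one_smul]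
  have : L.det = C ^ n * LinearMap.det L₀ := by
    rw [ContinuousLinearMap.det, hLdec, LinearMap.det_smul, finrank_euclideanSpace_fin]
  rw [this, abs_mul, habs, mul_one, abs_pow, abs_of_pos hC]

lemma density_ball_nonempty {n : ℕ} {s : Set (EuclideanSpace ℝ (Fin n))}
    {x : EuclideanSpace ℝ (Fin n)}
    (hd : Tendsto (fun r => volume (s ∩ closedBall x r) / volume (closedBall x r))
      (nhdsWithin 0 (Set.Ioi 0)) (nhds 1))
    {v : EuclideanSpace ℝ (Fin n)} (hv : ‖v‖ = 1) {ε : ℝ} (hε : 0 < ε) (hε1 : ε ≤ 1) :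
    ∀ᶠ r in nhdsWithin (0:ℝ) (Set.Ioi 0), (s ∩ closedBall (x + r • v) (ε * r)).Nonempty := by
  have hε' : (0:ℝ) < 1 + ε := by linarith
  set c : ENNReal := ENNReal.ofReal ((ε / (1 + ε)) ^ n) with hc
  have hcpos : 0 < c := ENNReal.ofReal_pos.2 (by positivity)
  have h1c : 1 - c < 1 := ENNReal.sub_lt_self ENNReal.one_ne_top one_ne_zero hcpos.ne'
  have hev : ∀ᶠ R in nhdsWithin (0:ℝ) (Set.Ioi 0),
      1 - c < volume (s ∩ closedBall x R) / volume (closedBall x R) :=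
    hd.eventually (eventually_gt_nhds h1c)
  have hmap : Tendsto (fun r : ℝ => (1 + ε) * r) (nhdsWithin 0 (Set.Ioi 0))
      (nhdsWithin 0 (Set.Ioi 0)) := by
    rw [tendsto_nhdsWithin_iff]
    constructor
    · have : Tendsto (fun r : ℝ => (1 + ε) * r) (nhds 0) (nhds ((1+ε) * 0)) :=
        (continuous_const.mul continuous_id).tendsto 0
      simpa using this.mono_left nhdsWithin_le_nhds
    · filter_upwards [self_mem_nhdsWithin] with r hr
      exact mul_pos hε' hr
  filter_upwards [hmap.eventually hev, self_mem_nhdsWithin] with r hratio hr0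
  rw [Set.mem_Ioi] at hr0
  rcases (s ∩ closedBall (x + r • v) (ε * r)).eq_empty_or_nonempty with he | hne
  · exfalso
    set R := (1 + ε) * r with hR
    have hR0 : 0 < R := mul_pos hε' hr0
    have hεr0 : (0:ℝ) ≤ ε * r := by positivity
    -- small ball inside big ball
    have hsub : closedBall (x + r • v) (ε * r) ⊆ closedBall x R := by
      apply closedBall_subset_closedBall'
      have : dist (x + r • v) x = r := by
        rw [dist_eq_norm]
        simp [norm_smul, abs_of_pos hr0, hv]
      rw [this, hR]; nlinarith
    have hdisj : s ∩ closedBall x R ⊆ closedBall x R \ closedBall (x + r • v) (ε * r) := by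
      intro y hy
      refine ⟨hy.2, fun hmem => ?_⟩
      exact Set.eq_empty_iff_forall_notMem.1 he y ⟨hy.1, hmem⟩
    have hbigne : volume (closedBall x R) ≠ 0 :=
      (Metric.measure_closedBall_pos volume x hR0).ne'
    have hbigtop : volume (closedBall x R) ≠ ⊤ := measure_closedBall_lt_top.ne
    -- small ball measure = c * big ball measure
    have hsmalleq : volume (closedBall (x + r • v) (ε * r)) = c * volume (closedBall x R) := by
      rw [Measure.addHaar_closedBall volume _ hεr0, Measure.addHaar_closedBall volume _ hR0.le,
        finrank_euclideanSpace_fin]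
      have hreal : (ε * r) ^ n = (ε / (1 + ε)) ^ n * R ^ n := by
        rw [← mul_pow, hR]
        congr 1
        field_simp
      rw [hreal, ENNReal.ofReal_mul (by positivity), hc, mul_assoc]
    have hle : volume (s ∩ closedBall x R)
        ≤ volume (closedBall x R) - c * volume (closedBall x R) := by
      calc volume (s ∩ closedBall x R)
          ≤ volume (closedBall x R \ closedBall (x + r • v) (ε * r)) := measure_mono hdisj
        _ = volume (closedBall x R) - volume (closedBall (x + r • v) (ε * r)) :=
            measure_diff hsub measurableSet_closedBall.nullMeasurableSet
              measure_closedBall_lt_top.ne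
        _ = volume (closedBall x R) - c * volume (closedBall x R) := by rw [hsmalleq]
    have hfinal : volume (s ∩ closedBall x R) / volume (closedBall x R) ≤ 1 - c := by
      rw [ENNReal.div_le_iff hbigne hbigtop]
      calc volume (s ∩ closedBall x R)
          ≤ volume (closedBall x R) - c * volume (closedBall x R) := hle
        _ = (1 - c) * volume (closedBall x R) := by
            rw [ENNReal.sub_mul (fun _ _ => hbigtop), one_mul]
    exact absurd hfinal (not_le.2 hratio)
  · exact hne

lemma norm_fderiv_eq_of_density {n : ℕ} {s : Set (EuclideanSpace ℝ (Fin n))}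
    {x : EuclideanSpace ℝ (Fin n)} (hxs : x ∈ s)
    {f : EuclideanSpace ℝ (Fin n) → EuclideanSpace ℝ (Fin n)}
    {L : EuclideanSpace ℝ (Fin n) →L[ℝ] EuclideanSpace ℝ (Fin n)}
    (hf : HasFDerivAt f L x) {C : ℝ} (hC0 : 0 ≤ C)
    (hsim : ∀ u ∈ s, ‖f u - f x‖ = C * ‖u - x‖)
    (hd : Tendsto (fun r => volume (s ∩ closedBall x r) / volume (closedBall x r))
      (nhdsWithin 0 (Set.Ioi 0)) (nhds 1)) :
    ∀ v, ‖L v‖ = C * ‖v‖ := by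
  -- reduce to unit vectors
  suffices hunit : ∀ v : EuclideanSpace ℝ (Fin n), ‖v‖ = 1 → ‖L v‖ = C by
    intro v
    rcases eq_or_ne v 0 with rfl | hv0
    · simp
    · have hnv : (0:ℝ) < ‖v‖ := norm_pos_iff.2 hv0
      have hu : ‖(‖v‖⁻¹ • v : EuclideanSpace ℝ (Fin n))‖ = 1 := by
        rw [norm_smul, norm_inv, norm_norm, inv_mul_cancel₀ hnv.ne']
      have h1 := hunit _ hu
      have h2 : L v = ‖v‖ • L (‖v‖⁻¹ • v) := by
        rw [_root_.map_smul, smul_smul, mul_inv_cancel₀ hnv.ne', one_smul]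
      rw [h2, norm_smul, norm_norm, h1, mul_comm]
  intro v hv
  set M : ℝ := C + 2 + ‖L‖ with hM
  have hM0 : 0 ≤ M := by have := norm_nonneg L; rw [hM]; linarith
  -- key estimate for each ε
  have hkey : ∀ ε : ℝ, 0 < ε → ε ≤ 1 → |‖L v‖ - C| ≤ ε * M := by
    intro ε hε hε1
    -- little-o property
    have hlo := hf.isLittleO.def hε
    rw [Metric.eventually_nhds_iff] at hlo
    obtain ⟨ρ, hρ, hρprop⟩ := hlo
    have hball := density_ball_nonempty hd hv hε hε1
    have hIoo : Set.Ioo (0:ℝ) (ρ/2) ∈ nhdsWithin (0:ℝ) (Set.Ioi 0) :=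
      Ioo_mem_nhdsGT_of_mem ⟨le_refl 0, half_pos hρ⟩
    obtain ⟨r, hr1, hr2⟩ := (hball.and hIoo).exists
    obtain ⟨hr0, hrρ⟩ := hr2
    obtain ⟨u, hus, hucb⟩ := hr1
    have h1 : ‖u - (x + r • v)‖ ≤ ε * r := by
      rw [← dist_eq_norm]; exact Metric.mem_closedBall.1 hucb
    have hrv : ‖(r • v : EuclideanSpace ℝ (Fin n))‖ = r := by
      rw [norm_smul, hv, Real.norm_eq_abs, abs_of_pos hr0, mul_one]
    have hdecomp : u - x = (u - (x + r • v)) + r • v := by abel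
    have h2 : ‖u - x‖ ≤ 2 * r := by
      rw [hdecomp]
      refine le_trans (norm_add_le _ _) ?_
      rw [hrv]; nlinarith
    have hρu : dist u x < ρ := by
      rw [dist_eq_norm]; linarith [h2, hrρ, half_lt_self hρ]
    have h3 : ‖f u - f x - L (u - x)‖ ≤ ε * (2 * r) := by
      refine le_trans (hρprop hρu) ?_
      exact mul_le_mul_of_nonneg_left h2 hε.le
    have h4 : ‖f u - f x‖ = C * ‖u - x‖ := hsim u hus
    have h5 : |‖u - x‖ - r| ≤ ε * r := by
      have := abs_norm_sub_norm_le (u - x) (r • v)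
      rw [hrv] at this
      refine le_trans this ?_
      have : u - x - r • v = u - (x + r • v) := by abel
      rw [this]; exact h1
    have h6 : |‖L (u - x)‖ - r * ‖L v‖| ≤ ‖L‖ * (ε * r) := by
      have hLrv : ‖L (r • v)‖ = r * ‖L v‖ := by
        rw [_root_.map_smul, norm_smul, Real.norm_eq_abs, abs_of_pos hr0]
      rw [← hLrv]
      refine le_trans (abs_norm_sub_norm_le _ _) ?_
      rw [← map_sub]
      refine le_trans (L.le_opNorm _) ?_
      apply mul_le_mul_of_nonneg_left _ (norm_nonneg L)
      have : u - x - r • v = u - (x + r • v) := by abel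
      rw [this]; exact h1
    have h7 : |‖f u - f x‖ - ‖L (u - x)‖| ≤ ε * (2 * r) := by
      refine le_trans (abs_norm_sub_norm_le _ _) ?_
      have : f u - f x - L (u - x) = f u - f x - L (u - x) := rfl
      exact h3
    -- assemble: r * |‖L v‖ - C| ≤ ε * r * M
    have h8 : |r * ‖L v‖ - r * C| ≤ ε * r * M := by
      have e5 : |C * ‖u - x‖ - C * r| ≤ C * (ε * r) := by
        rw [← mul_sub, abs_mul, abs_of_nonneg hC0]
        exact mul_le_mul_of_nonneg_left h5 hC0
      calc |r * ‖L v‖ - r * C|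
          ≤ |r * ‖L v‖ - ‖L (u - x)‖| + |‖L (u - x)‖ - ‖f u - f x‖|
              + |‖f u - f x‖ - r * C| := by
            have := abs_sub_le (r * ‖L v‖) (‖L (u - x)‖) (r * C)
            have h' := abs_sub_le (‖L (u - x)‖) (‖f u - f x‖) (r * C)
            linarith
        _ ≤ ‖L‖ * (ε * r) + ε * (2 * r) + C * (ε * r) := by
            have a1 : |r * ‖L v‖ - ‖L (u - x)‖| ≤ ‖L‖ * (ε * r) := by
              rw [abs_sub_comm]; exact h6
            have a2 : |‖L (u - x)‖ - ‖f u - f x‖| ≤ ε * (2 * r) := by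
              rw [abs_sub_comm]; exact h7
            have a3 : |‖f u - f x‖ - r * C| ≤ C * (ε * r) := by
              rw [h4, mul_comm r C]; exact e5
            linarith
        _ ≤ ε * r * M := by rw [hM]; ring_nf; nlinarith [norm_nonneg L, hε.le, hr0.le]
    have h9 : r * |‖L v‖ - C| ≤ r * (ε * M) := by
      rw [← abs_of_pos hr0, ← abs_mul, mul_sub]
      calc |r * ‖L v‖ - r * C| ≤ ε * r * M := h8
        _ = |r| * (ε * M) := by rw [abs_of_pos hr0]; ring
    have := (mul_le_mul_iff_right₀ hr0).1 h9
    linarith [this]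
  -- conclude
  have habs : |‖L v‖ - C| ≤ 0 := by
    refine le_of_forall_pos_le_add fun δ hδ => ?_
    have hM1 : (0:ℝ) < M + 1 := by linarith
    set ε : ℝ := min (1/2) (δ / (M + 1)) with hε
    have hε0 : 0 < ε := lt_min (by norm_num) (div_pos hδ hM1)
    have hε1 : ε ≤ 1 := le_trans (min_le_left _ _) (by norm_num)
    have h := hkey ε hε0 hε1
    have : ε * M ≤ δ := by
      have h1 : ε ≤ δ / (M + 1) := min_le_right _ _
      have h2 : ε * M ≤ (δ / (M + 1)) * (M + 1) :=
        mul_le_mul h1 (by linarith) hM0 (by positivity)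
      rwa [div_mul_cancel₀ _ hM1.ne'] at h2
    linarith
  have : ‖L v‖ - C = 0 := by
    have := abs_nonneg (‖L v‖ - C)
    have heq : |‖L v‖ - C| = 0 := le_antisymm habs this
    exact abs_eq_zero.1 heq
  linarith

lemma ae_norm_fderiv_eq {n : ℕ} {U : Set (EuclideanSpace ℝ (Fin n))} (hUm : MeasurableSet U)
    {β : EuclideanSpace ℝ (Fin n) → EuclideanSpace ℝ (Fin n)}
    {Dβ : EuclideanSpace ℝ (Fin n) → EuclideanSpace ℝ (Fin n) →L[ℝ] EuclideanSpace ℝ (Fin n)}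
    (hDβ : ∀ x ∈ U, HasFDerivAt β (Dβ x) x) {C : ℝ} (hC0 : 0 ≤ C)
    (hsim : ∀ x ∈ U, ∀ x' ∈ U, ‖β x - β x'‖ = C * ‖x - x'‖) :
    ∀ᵐ x ∂(volume.restrict U), ∀ v, ‖Dβ x v‖ = C * ‖v‖ := by
  filter_upwards [Besicovitch.ae_tendsto_measure_inter_div volume U, ae_restrict_mem hUm]
    with x hx hxU
  exact norm_fderiv_eq_of_density hxU (hDβ x hxU) hC0 (fun u hu => hsim u hu x hxU) hx

lemma pullback_half (n k : ℕ) (hk : k ≤ n) (p C : ℝ) (hp : 1 ≤ p) (hC : 0 < C)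
    (U V : Set (EuclideanSpace ℝ (Fin n))) (hUm : MeasurableSet U) (hVm : MeasurableSet V)
    (β : EuclideanSpace ℝ (Fin n) → EuclideanSpace ℝ (Fin n))
    (hβV : ∀ x ∈ U, β x ∈ V) (hβinj : Set.InjOn β U)
    (hβsim : ∀ x ∈ U, ∀ x' ∈ U, ‖β x - β x'‖ = C * ‖x - x'‖)
    (Dβ : EuclideanSpace ℝ (Fin n) → EuclideanSpace ℝ (Fin n) →L[ℝ] EuclideanSpace ℝ (Fin n))
    (hDβ : ∀ x ∈ U, HasFDerivAt β (Dβ x) x)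
    (ω : EuclideanSpace ℝ (Fin n) → {s : Finset (Fin n) // s.card = k} → ℝ)
    (hωint : IntegrableOn (fun y => coeffNorm (ω y) ^ p) V) :
    (∫ x in U, coeffNorm (fun i => ∑ j, ω (β x) j * jacMinor n k (Dβ x) i j) ^ p) ^ (1 / p)
        ≤ ((n.factorial : ℝ) ^ ((p + 1) / p) / ((n - k).factorial : ℝ)) *
            C ^ ((p * (k:ℝ) - (n:ℝ)) / p) * (∫ y in V, coeffNorm (ω y) ^ p) ^ (1 / p) := by
  have hp0 : (0:ℝ) < p := lt_of_lt_of_le one_pos hp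
  have hβcont : ContinuousOn β U := by
    have : LipschitzOnWith (C.toNNReal) β U := by
      apply LipschitzOnWith.of_dist_le_mul
      intro x hx y hy
      rw [dist_eq_norm, dist_eq_norm, hβsim x hx y hy]
      exact mul_le_mul_of_nonneg_right (Real.le_coe_toNNReal C) (norm_nonneg _)
    exact this.continuousOn
  have hDβw : ∀ x ∈ U, HasFDerivWithinAt β (Dβ x) U x :=
    fun x hx => (hDβ x hx).hasFDerivWithinAt
  have hae : ∀ᵐ x ∂(volume.restrict U), ∀ v, ‖Dβ x v‖ = C * ‖v‖ :=
    ae_norm_fderiv_eq hUm hDβ hC.le hβsim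
  have hdet : ∀ᵐ x ∂(volume.restrict U), |(Dβ x).det| = C ^ n := by
    filter_upwards [hae] with x hx
    exact abs_det_of_norm_eq hC hx
  set W := β '' U with hW
  have hWm : MeasurableSet W := hUm.image_of_continuousOn_injOn hβcont hβinj
  have hWV : W ⊆ V := by rintro y ⟨x, hx, rfl⟩; exact hβV x hx
  set g : EuclideanSpace ℝ (Fin n) → ℝ := fun y => coeffNorm (ω y) ^ p with hg
  have hg0 : ∀ y, 0 ≤ g y := fun y => Real.rpow_nonneg (coeffNorm_nonneg _) p
  have hgW : IntegrableOn g W := hωint.mono_set hWV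
  have h2 : IntegrableOn (fun x => |(Dβ x).det| • g (β x)) U :=
    (integrableOn_image_iff_integrableOn_abs_det_fderiv_smul volume hUm hDβw hβinj g).1 hgW
  have hCn : (0:ℝ) < C ^ n := by positivity
  have h4 : IntegrableOn (fun x => g (β x)) U := by
    have h3 : IntegrableOn (fun x => (C ^ n)⁻¹ * (|(Dβ x).det| • g (β x))) U :=
      h2.const_mul _
    apply h3.congr
    filter_upwards [hdet] with x hx
    rw [hx, smul_eq_mul, ← mul_assoc, inv_mul_cancel₀ hCn.ne', one_mul]
  have heq : ∫ x in U, |(Dβ x).det| • g (β x) = ∫ y in W, g y :=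
    (integral_image_eq_integral_abs_det_fderiv_smul volume hUm hDβw hβinj g).symm
  have hCV : ∫ y in W, g y ≤ ∫ y in V, g y := by
    apply setIntegral_mono_set hωint
    · exact Eventually.of_forall fun y => hg0 y
    · exact hWV.eventuallyLE
  have hJ : ∫ x in U, g (β x) = (C ^ n)⁻¹ * ∫ y in W, g y := by
    rw [← heq, ← integral_const_mul]
    apply integral_congr_ae
    filter_upwards [hdet] with x hx
    rw [hx, smul_eq_mul, ← mul_assoc, inv_mul_cancel₀ hCn.ne', one_mul]
  -- pointwise bound
  set K : ℝ := ((n.factorial : ℝ) / ((n - k).factorial : ℝ)) * C ^ k with hK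
  have hK0 : 0 ≤ K := by positivity
  have hKchoose : ((n.choose k : ℝ) * (k.factorial : ℝ)) * C ^ k = K := by
    rw [hK]
    congr 1
    have h := Nat.choose_mul_factorial_mul_factorial hk
    have h' : ((n.choose k : ℝ)) * (k.factorial : ℝ) * ((n-k).factorial : ℝ) = (n.factorial : ℝ) := by
      exact_mod_cast congrArg (Nat.cast : ℕ → ℝ) h
    have hnk : ((n-k).factorial : ℝ) ≠ 0 := by positivity
    field_simp
    linarith [h']
  have hFb : ∀ᵐ x ∂(volume.restrict U),
      coeffNorm (fun i => ∑ j, ω (β x) j * jacMinor n k (Dβ x) i j) ^ p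
        ≤ K ^ p * g (β x) := by
    filter_upwards [hae] with x hx
    have hb := coeffNorm_pull_le hC.le (fun v => (hx v).le) (ω (β x))
    have hb2 : coeffNorm (fun i => ∑ j, ω (β x) j * jacMinor n k (Dβ x) i j)
        ≤ K * coeffNorm (ω (β x)) := by
      refine le_trans hb ?_
      rw [← hKchoose]
      apply le_of_eq; ring
    calc coeffNorm (fun i => ∑ j, ω (β x) j * jacMinor n k (Dβ x) i j) ^ p
        ≤ (K * coeffNorm (ω (β x))) ^ p :=
          Real.rpow_le_rpow (coeffNorm_nonneg _) hb2 hp0.le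
      _ = K ^ p * g (β x) := by
          rw [Real.mul_rpow hK0 (coeffNorm_nonneg _)]
  have hKp0 : (0:ℝ) ≤ K ^ p := Real.rpow_nonneg hK0 p
  have hI : ∫ x in U, coeffNorm (fun i => ∑ j, ω (β x) j * jacMinor n k (Dβ x) i j) ^ p
      ≤ K ^ p * ((C ^ n)⁻¹ * ∫ y in V, g y) := by
    calc ∫ x in U, coeffNorm (fun i => ∑ j, ω (β x) j * jacMinor n k (Dβ x) i j) ^ p
        ≤ ∫ x in U, K ^ p * g (β x) := by
          apply integral_mono_of_nonneg
          · exact Eventually.of_forall fun x => Real.rpow_nonneg (coeffNorm_nonneg _) p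
          · exact h4.const_mul _
          · exact hFb
      _ = K ^ p * ∫ x in U, g (β x) := integral_const_mul _ _
      _ = K ^ p * ((C ^ n)⁻¹ * ∫ y in W, g y) := by rw [hJ]
      _ ≤ K ^ p * ((C ^ n)⁻¹ * ∫ y in V, g y) := by
          apply mul_le_mul_of_nonneg_left _ hKp0
          apply mul_le_mul_of_nonneg_left hCV (by positivity)
  set A : ℝ := ∫ y in V, g y with hA
  have hA0 : 0 ≤ A := setIntegral_nonneg hVm fun y _ => hg0 y
  have hF0 : 0 ≤ ∫ x in U, coeffNorm (fun i => ∑ j, ω (β x) j * jacMinor n k (Dβ x) i j) ^ p :=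
    integral_nonneg fun x => Real.rpow_nonneg (coeffNorm_nonneg _) p
  have step1 : (∫ x in U, coeffNorm (fun i => ∑ j, ω (β x) j * jacMinor n k (Dβ x) i j) ^ p) ^ (1/p)
      ≤ (K ^ p * (C ^ n)⁻¹ * A) ^ (1/p) := by
    apply Real.rpow_le_rpow hF0 _ (by positivity)
    rw [mul_assoc]; exact hI
  have hKCn0 : (0:ℝ) ≤ K ^ p * (C ^ n)⁻¹ := by positivity
  have step2 : (K ^ p * (C ^ n)⁻¹ * A) ^ (1/p) = (K ^ p * (C ^ n)⁻¹) ^ (1/p) * A ^ (1/p) :=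
    Real.mul_rpow hKCn0 hA0
  have step3 : (K ^ p * (C ^ n)⁻¹) ^ (1/p)
      ≤ ((n.factorial : ℝ) ^ ((p + 1) / p) / ((n - k).factorial : ℝ)) * C ^ ((p * (k:ℝ) - (n:ℝ)) / p) := by
    have hsimp : (K ^ p * (C ^ n)⁻¹) ^ (1/p) = K * C ^ (-(n:ℝ)/p) := by
      have hinv : ((C:ℝ) ^ n)⁻¹ = C ^ (-(n:ℝ)) := by
        rw [← Real.rpow_natCast C n, ← Real.rpow_neg hC.le]
      rw [hinv, Real.mul_rpow (Real.rpow_nonneg hK0 p) (Real.rpow_nonneg hC.le _),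
        ← Real.rpow_mul hK0, mul_one_div, div_self hp0.ne', Real.rpow_one,
        ← Real.rpow_mul hC.le]
      congr 2
      ring
    rw [hsimp]
    have hexp : K * C ^ (-(n:ℝ)/p)
        = ((n.factorial : ℝ) / ((n - k).factorial : ℝ)) * C ^ ((p * (k:ℝ) - (n:ℝ)) / p) := by
      rw [hK, mul_assoc]
      congr 1
      rw [← Real.rpow_natCast C k, ← Real.rpow_add hC]
      congr 1
      field_simp
      ring
    rw [hexp]
    apply mul_le_mul_of_nonneg_right _ (Real.rpow_nonneg hC.le _)
    have h1 : (n.factorial : ℝ) ≤ (n.factorial : ℝ) ^ ((p+1)/p) := by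
      have hone : (1:ℝ) ≤ (n.factorial : ℝ) := by exact_mod_cast n.factorial_pos
      have hexp1 : (1:ℝ) ≤ (p+1)/p := by rw [le_div_iff₀ hp0]; linarith
      calc (n.factorial:ℝ) = (n.factorial:ℝ) ^ (1:ℝ) := (Real.rpow_one _).symm
        _ ≤ (n.factorial:ℝ) ^ ((p+1)/p) := Real.rpow_le_rpow_of_exponent_le hone hexp1
    exact div_le_div_of_nonneg_right h1 (by positivity)
  calc (∫ x in U, coeffNorm (fun i => ∑ j, ω (β x) j * jacMinor n k (Dβ x) i j) ^ p) ^ (1/p)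
      ≤ (K ^ p * (C ^ n)⁻¹ * A) ^ (1/p) := step1
    _ = (K ^ p * (C ^ n)⁻¹) ^ (1/p) * A ^ (1/p) := step2
    _ ≤ ((n.factorial : ℝ) ^ ((p + 1) / p) / ((n - k).factorial : ℝ))
          * C ^ ((p * (k:ℝ) - (n:ℝ)) / p) * A ^ (1/p) := by
        apply mul_le_mul_of_nonneg_right step3 (Real.rpow_nonneg hA0 _)

/-- **Bounds for the pull-back operators under a `C`-bi-Lipschitz homeomorphism.**
If `β : U → V` is `C`-Lipschitz with inverse `α : V → U` that is `(1/C)`-Lipschitz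
(both differentiable on their domains), then the pull-back on `L^p` `k`-forms satisfies
`‖β*ω‖_{L^p(U)} ≤ (n!^{(p+1)/p}/(n-k)!) C^{(pk-n)/p} ‖ω‖_{L^p(V)}` and
`‖α*η‖_{L^p(V)} ≤ (n!^{(p+1)/p}/(n-k)!) C^{(n-pk)/p} ‖η‖_{L^p(U)}`. -/
theorem pullback_Lp_norm_bound (n k : ℕ) (hk : k ≤ n) (p C : ℝ) (hp : 1 ≤ p) (hC : 0 < C)
    (U V : Set (EuclideanSpace ℝ (Fin n))) (hUm : MeasurableSet U) (hVm : MeasurableSet V)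
    (β α : EuclideanSpace ℝ (Fin n) → EuclideanSpace ℝ (Fin n))
    (hβV : ∀ x ∈ U, β x ∈ V) (hαU : ∀ y ∈ V, α y ∈ U)
    (hαβ : ∀ x ∈ U, α (β x) = x) (hβα : ∀ y ∈ V, β (α y) = y)
    (hβlip : ∀ x ∈ U, ∀ x' ∈ U, ‖β x - β x'‖ ≤ C * ‖x - x'‖)
    (hαlip : ∀ y ∈ V, ∀ y' ∈ V, ‖α y - α y'‖ ≤ (1 / C) * ‖y - y'‖)
    (Dβ : EuclideanSpace ℝ (Fin n) → EuclideanSpace ℝ (Fin n) →L[ℝ] EuclideanSpace ℝ (Fin n))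
    (Dα : EuclideanSpace ℝ (Fin n) → EuclideanSpace ℝ (Fin n) →L[ℝ] EuclideanSpace ℝ (Fin n))
    (hDβ : ∀ x ∈ U, HasFDerivAt β (Dβ x) x) (hDα : ∀ y ∈ V, HasFDerivAt α (Dα y) y)
    (ω η : EuclideanSpace ℝ (Fin n) → {s : Finset (Fin n) // s.card = k} → ℝ)
    (hωmeas : ∀ j, Measurable fun y => ω y j) (hηmeas : ∀ j, Measurable fun x => η x j)
    (hωint : IntegrableOn (fun y => coeffNorm (ω y) ^ p) V)
    (hηint : IntegrableOn (fun x => coeffNorm (η x) ^ p) U) :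
    (∫ x in U, coeffNorm (fun i => ∑ j, ω (β x) j * jacMinor n k (Dβ x) i j) ^ p) ^ (1 / p)
        ≤ ((n.factorial : ℝ) ^ ((p + 1) / p) / ((n - k).factorial : ℝ)) *
            C ^ ((p * k - n) / p) * (∫ y in V, coeffNorm (ω y) ^ p) ^ (1 / p) ∧
    (∫ y in V, coeffNorm (fun i => ∑ j, η (α y) j * jacMinor n k (Dα y) i j) ^ p) ^ (1 / p)
        ≤ ((n.factorial : ℝ) ^ ((p + 1) / p) / ((n - k).factorial : ℝ)) *
            C ^ ((n - p * k) / p) * (∫ x in U, coeffNorm (η x) ^ p) ^ (1 / p) := by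
  have hβsim : ∀ x ∈ U, ∀ x' ∈ U, ‖β x - β x'‖ = C * ‖x - x'‖ := by
    intro x hx x' hx'
    refine le_antisymm (hβlip x hx x' hx') ?_
    have h1 := hαlip (β x) (hβV x hx) (β x') (hβV x' hx')
    rw [hαβ x hx, hαβ x' hx'] at h1
    rw [one_div] at h1
    calc C * ‖x - x'‖ ≤ C * (C⁻¹ * ‖β x - β x'‖) :=
          mul_le_mul_of_nonneg_left h1 hC.le
      _ = ‖β x - β x'‖ := by field_simp
  have hαsim : ∀ y ∈ V, ∀ y' ∈ V, ‖α y - α y'‖ = (1/C) * ‖y - y'‖ := by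
    intro y hy y' hy'
    refine le_antisymm (hαlip y hy y' hy') ?_
    have h1 := hβlip (α y) (hαU y hy) (α y') (hαU y' hy')
    rw [hβα y hy, hβα y' hy'] at h1
    rw [one_div, ← mul_le_mul_iff_right₀ hC]
    calc C * (C⁻¹ * ‖y - y'‖) = ‖y - y'‖ := by field_simp
      _ ≤ C * ‖α y - α y'‖ := h1
  have hβinj : Set.InjOn β U := fun x hx x' hx' h => by
    rw [← hαβ x hx, ← hαβ x' hx', h]
  have hαinj : Set.InjOn α V := fun y hy y' hy' h => by
    rw [← hβα y hy, ← hβα y' hy', h]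
  constructor
  · exact pullback_half n k hk p C hp hC U V hUm hVm β hβV hβinj hβsim Dβ hDβ ω hωint
  · have hC1 : (0:ℝ) < 1/C := by positivity
    have h := pullback_half n k hk p (1/C) hp hC1 V U hVm hUm α hαU hαinj hαsim Dα hDα η hηint
    have hconv : ((1:ℝ)/C) ^ ((p * (k:ℝ) - (n:ℝ)) / p) = C ^ (((n:ℝ) - p * (k:ℝ)) / p) := by
      rw [one_div, ← Real.rpow_neg_one C, ← Real.rpow_mul hC.le]
      congr 1
      ring
    rw [hconv] at h
    exact h
end
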